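/- For every n ≥ 0, with Ch_{n,1/2} := (-1)^n n! C_n / 4^n, one has Ch_{n,1/2} = ∑_{m=0}^n 2^{-m} E_m S₁(n,m), where E_m are the Euler numbers and S₁(n,m) the signed Stirling numbers of the first kind. -/

import Mathlib

open Finset Polynomial

/-- Falling factorial in a commutative ring. -/
noncomputable def ffac {R : Type*} [CommRing R] (x : R) (n : ℕ) : R :=
  ∏ i ∈ Finset.range n, (x - (i : R))

theorem ffac_succ {R : Type*} [CommRing R] (x : R) (n : ℕ) :
    ffac x (n + 1) = ffac x n * (x - n) := Finset.prod_range_succ _ _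

/-- Chu–Vandermonde for falling factorials. -/
theorem ffac_add {R : Type*} [CommRing R] (x y : R) (n : ℕ) :
    ffac (x + y) n = ∑ k ∈ Finset.range (n + 1),
      (n.choose k : R) * ffac x k * ffac y (n - k) := by
  induction n with
  | zero => simp [ffac]
  | succ n ih =>
    have peel : ∑ k ∈ Finset.range (n + 2),
        ((n+1).choose k : R) * ffac x k * ffac y (n + 1 - k)
        = ffac y (n+1) + ∑ k ∈ Finset.range (n + 1),
            ((n+1).choose (k+1) : R) * ffac x (k+1) * ffac y (n - k) := by
      rw [Finset.sum_range_succ']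
      simp [ffac, add_comm]
    rw [ffac_succ, ih, peel]
    have expand : ∀ k ∈ Finset.range (n+1),
        ((n+1).choose (k+1) : R) * ffac x (k+1) * ffac y (n - k)
        = (n.choose k : R) * ffac x (k+1) * ffac y (n-k)
          + (n.choose (k+1) : R) * ffac x (k+1) * ffac y (n-k) := by
      intro k hk
      rw [Nat.choose_succ_succ n k]
      push_cast
      ring
    rw [Finset.sum_congr rfl expand, Finset.sum_add_distrib]
    -- the second sum, shifted back
    have shift : ∑ k ∈ Finset.range (n+1),
        (n.choose (k+1) : R) * ffac x (k+1) * ffac y (n-k)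
        = (∑ k ∈ Finset.range (n+1), (n.choose k : R) * ffac x k * ffac y (n+1-k))
          - ffac y (n+1) := by
      have h2 : ∑ k ∈ Finset.range (n+2), (n.choose k : R) * ffac x k * ffac y (n+1-k)
          = (∑ k ∈ Finset.range (n+1), (n.choose k : R) * ffac x k * ffac y (n+1-k)) := by
        rw [Finset.sum_range_succ]
        simp
      rw [eq_sub_iff_add_eq, ← h2,
        Finset.sum_range_succ' (fun k => (n.choose k : R) * ffac x k * ffac y (n+1-k)) (n+1)]
      simp [ffac, Nat.succ_sub_succ]
    rw [shift]
    have per : ∀ k ∈ Finset.range (n+1),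
        (n.choose k : R) * ffac x (k+1) * ffac y (n-k)
          + (n.choose k : R) * ffac x k * ffac y (n+1-k)
        = (n.choose k : R) * ffac x k * ffac y (n-k) * (x + y - (n:R)) := by
      intro k hk
      rw [Finset.mem_range] at hk
      have hk' : k ≤ n := Nat.lt_succ_iff.mp hk
      have h1 : n + 1 - k = (n - k) + 1 := by omega
      have hcast : ((n - k : ℕ) : R) = (n : R) - (k : R) := by
        push_cast [hk']; ring
      rw [h1, ffac_succ, ffac_succ, hcast]
      ring
    have hsum : ∑ k ∈ Finset.range (n+1),
        (n.choose k : R) * ffac x k * ffac y (n-k) * (x + y - (n:R))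
        = ∑ k ∈ Finset.range (n+1), ((n.choose k : R) * ffac x (k+1) * ffac y (n-k)
            + (n.choose k : R) * ffac x k * ffac y (n+1-k)) := by
      exact Finset.sum_congr rfl (fun k hk => (per k hk).symm)
    rw [Finset.sum_mul, hsum, Finset.sum_add_distrib]
    ring

/-- Signed Stirling numbers of the first kind. -/
noncomputable def stirling1 (n m : ℕ) : ℚ :=
  (∏ i ∈ Finset.range n, (Polynomial.X - Polynomial.C (i : ℚ))).coeff m

noncomputable def Pfall (n : ℕ) : ℚ[X] := ∏ i ∈ Finset.range n, (X - C (i : ℚ))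

lemma ffac_X (n : ℕ) : ffac (X : ℚ[X]) n = Pfall n := by
  unfold ffac Pfall
  exact Finset.prod_congr rfl fun i _ => by rw [Polynomial.C_eq_natCast]

lemma ffac_C (c : ℚ) (n : ℕ) : ffac (C c : ℚ[X]) n = C (ffac c n) := by
  unfold ffac
  rw [map_prod]
  exact Finset.prod_congr rfl fun i _ => by rw [map_sub, Polynomial.C_eq_natCast]

lemma Pfall_comp (n : ℕ) :
    (Pfall n).comp (X + C (1/2 : ℚ)) = ffac (X + C (1/2 : ℚ)) n := by
  unfold Pfall ffac
  rw [Polynomial.prod_comp]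
  exact Finset.prod_congr rfl fun i _ => by
    rw [Polynomial.sub_comp, Polynomial.X_comp, Polynomial.C_comp, Polynomial.C_eq_natCast]

lemma Pfall_coeff_zero (n : ℕ) : (Pfall n).coeff 0 = if n = 0 then 1 else 0 := by
  cases n with
  | zero => simp [Pfall]
  | succ n =>
    rw [Polynomial.coeff_zero_eq_eval_zero]
    unfold Pfall
    rw [Polynomial.eval_prod]
    rw [Finset.prod_eq_zero (Finset.mem_range.mpr (Nat.succ_pos n))]
    · simp
    · simp

lemma Pfall_natDegree (n : ℕ) : (Pfall n).natDegree = n := by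
  unfold Pfall
  rw [Polynomial.natDegree_prod _ _ fun i _ => Polynomial.X_sub_C_ne_zero _]
  simp only [Polynomial.natDegree_X_sub_C]
  simp

noncomputable def LL (E : ℕ → ℚ) : ℚ[X] →ₗ[ℚ] ℚ :=
  Polynomial.lsum fun m => (((2:ℚ)^m)⁻¹ * E m) • (LinearMap.id : ℚ →ₗ[ℚ] ℚ)

lemma LL_monomial (E : ℕ → ℚ) (m : ℕ) (c : ℚ) :
    LL E (Polynomial.monomial m c) = ((2:ℚ)^m)⁻¹ * E m * c := by
  unfold LL
  rw [Polynomial.lsum_apply, Polynomial.sum_monomial_index]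
  · simp [mul_comm]
  · simp

lemma LL_Pfall (E : ℕ → ℚ) (n : ℕ) :
    LL E (Pfall n) = ∑ m ∈ Finset.range (n+1), ((2:ℚ)^m)⁻¹ * E m * stirling1 n m := by
  unfold LL
  rw [Polynomial.lsum_apply,
    Polynomial.sum_over_range' _ (fun m => by simp) (n+1)
      (by rw [Pfall_natDegree]; omega)]
  refine Finset.sum_congr rfl fun m _ => ?_
  show (((2:ℚ)^m)⁻¹ * E m) • ((Pfall n).coeff m) = _
  rw [smul_eq_mul]
  unfold Pfall stirling1
  ring

lemma euler_rec (E : ℕ → ℚ)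
    (hE : (PowerSeries.mk fun m => E m / (m.factorial : ℚ)) * (PowerSeries.exp ℚ + 1) = 2)
    (m : ℕ) :
    (∑ j ∈ Finset.range (m+1), (m.choose j : ℚ) * E j) + E m = if m = 0 then 2 else 0 := by
  have h := congrArg (PowerSeries.coeff m) hE
  rw [show (2 : PowerSeries ℚ) = PowerSeries.C 2 from (map_ofNat (PowerSeries.C (R := ℚ)) 2).symm] at h
  rw [PowerSeries.coeff_mul, Finset.Nat.sum_antidiagonal_eq_sum_range_succ_mk] at h
  simp only [map_add, PowerSeries.coeff_mk, PowerSeries.coeff_exp, PowerSeries.coeff_one,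
    PowerSeries.coeff_C, Algebra.algebraMap_self_apply, Nat.succ_eq_add_one] at h
  have key : ((m.factorial : ℚ)) * ∑ k ∈ Finset.range (m+1),
      E k / (k.factorial : ℚ) * (1/((m-k).factorial : ℚ) + if m - k = 0 then 1 else 0)
      = (∑ j ∈ Finset.range (m+1), (m.choose j : ℚ) * E j) + E m := by
    rw [Finset.mul_sum]
    have per : ∀ k ∈ Finset.range (m+1),
        (m.factorial : ℚ) * (E k / (k.factorial:ℚ) *
          (1/((m-k).factorial:ℚ) + if m - k = 0 then 1 else 0))
        = (m.choose k : ℚ) * E k + (if k = m then E m else 0) := by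
      intro k hk
      have hk' : k ≤ m := Nat.lt_succ_iff.mp (Finset.mem_range.mp hk)
      have h1 : (k.factorial : ℚ) ≠ 0 := Nat.cast_ne_zero.mpr (Nat.factorial_ne_zero _)
      have h2 : (((m-k).factorial : ℚ)) ≠ 0 := Nat.cast_ne_zero.mpr (Nat.factorial_ne_zero _)
      have hc : (m.choose k : ℚ) = (m.factorial : ℚ) / ((k.factorial : ℚ) * ((m-k).factorial : ℚ)) :=
        Nat.cast_choose ℚ hk'
      rcases eq_or_ne k m with rfl | hne
      · rw [if_pos rfl, if_pos (Nat.sub_self k)]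
        rw [Nat.sub_self, Nat.choose_self]
        simp only [Nat.factorial_zero]
        field_simp
        ring
      · have h0 : m - k ≠ 0 := by omega
        rw [if_neg h0, if_neg hne, hc]
        field_simp
        ring
    rw [Finset.sum_congr rfl per, Finset.sum_add_distrib,
      Finset.sum_ite_eq' (Finset.range (m+1)) m (fun _ => E m)]
    simp
  rw [← key, h]
  rcases eq_or_ne m 0 with rfl | hm
  · simp
  · simp [hm]

lemma LL_comp_shift (E : ℕ → ℚ)
    (hE : (PowerSeries.mk fun m => E m / (m.factorial : ℚ)) * (PowerSeries.exp ℚ + 1) = 2)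
    (p : ℚ[X]) :
    LL E (p.comp (X + C (1/2 : ℚ))) + LL E p = 2 * p.coeff 0 := by
  induction p using Polynomial.induction_on' with
  | add p q hp hq =>
    simp only [Polynomial.add_comp, map_add, Polynomial.coeff_add]
    ring_nf
    ring_nf at hp hq
    linarith
  | monomial m c =>
    have hs : (Polynomial.monomial m c).comp (X + C (1/2:ℚ))
        = ∑ j ∈ Finset.range (m+1),
            Polynomial.monomial j (c * (1/2 : ℚ)^(m-j) * (m.choose j : ℚ)) := by
      rw [Polynomial.monomial_comp, add_pow, Finset.mul_sum]
      refine Finset.sum_congr rfl fun j hj => ?_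
      rw [← Polynomial.C_mul_X_pow_eq_monomial]
      simp only [map_mul, map_pow, map_natCast]
      ring
    rw [hs, map_sum]
    simp only [LL_monomial, Polynomial.coeff_monomial]
    have hterm : ∀ j ∈ Finset.range (m+1),
        ((2:ℚ)^j)⁻¹ * E j * (c * (1/2 : ℚ)^(m-j) * (m.choose j : ℚ))
        = c * ((2:ℚ)^m)⁻¹ * ((m.choose j : ℚ) * E j) := by
      intro j hj
      have e1 : ((1:ℚ)/2)^(m-j) = ((2:ℚ)^(m-j))⁻¹ := by rw [one_div, inv_pow]
      have e2 : ((2:ℚ)^j)⁻¹ * ((2:ℚ)^(m-j))⁻¹ = ((2:ℚ)^m)⁻¹ := by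
        rw [← mul_inv, ← pow_add]
        congr 2
        have := Finset.mem_range.mp hj
        omega
      rw [e1, ← e2]
      ring
    rw [Finset.sum_congr rfl hterm, ← Finset.mul_sum]
    have hrec := euler_rec E hE m
    rcases eq_or_ne m 0 with rfl | hm
    · norm_num at hrec ⊢
      linear_combination c * hrec
    · simp only [if_neg hm] at hrec ⊢
      linear_combination (c * ((2:ℚ)^m)⁻¹) * hrec

lemma key_sum (E : ℕ → ℚ)
    (hE : (PowerSeries.mk fun m => E m / (m.factorial : ℚ)) * (PowerSeries.exp ℚ + 1) = 2)
    (n : ℕ) :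
    ∑ k ∈ Finset.range (n+1), (n.choose k : ℚ) * ffac (1/2:ℚ) k * LL E (Pfall (n-k))
    = (if n = 0 then 2 else 0) - LL E (Pfall n) := by
  have h1 : ((Pfall n).comp (X + C (1/2:ℚ)))
      = ∑ k ∈ Finset.range (n+1),
          ((n.choose k : ℚ) * ffac (1/2:ℚ) k) • Pfall (n-k) := by
    rw [Pfall_comp, show (X + C (1/2:ℚ)) = C (1/2:ℚ) + X from add_comm _ _,
      ffac_add (C (1/2:ℚ)) (X : ℚ[X]) n]
    refine Finset.sum_congr rfl fun k _ => ?_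
    rw [ffac_X, ffac_C, Polynomial.smul_eq_C_mul, map_mul, map_natCast]
    try ring
  have h2 := LL_comp_shift E hE (Pfall n)
  rw [h1, map_sum] at h2
  simp only [map_smul, smul_eq_mul] at h2
  rw [Pfall_coeff_zero] at h2
  rcases eq_or_ne n 0 with rfl | hn
  · norm_num at h2 ⊢
    try linarith
  · simp only [if_neg hn] at h2 ⊢
    linarith

lemma half_half (n : ℕ) :
    ∑ k ∈ Finset.range (n+1), (n.choose k : ℚ) * ffac (1/2:ℚ) k * ffac (1/2:ℚ) (n-k)
    = if n = 0 then 1 else if n = 1 then 1 else 0 := by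
  have h : ffac (1:ℚ) n = ∑ k ∈ Finset.range (n+1),
      (n.choose k : ℚ) * ffac (1/2:ℚ) k * ffac (1/2:ℚ) (n-k) := by
    have h := ffac_add (1/2:ℚ) (1/2:ℚ) n
    rw [show (1:ℚ)/2 + 1/2 = 1 by norm_num] at h
    exact h
  rw [← h]
  match n with
  | 0 => simp [ffac]
  | 1 => simp [ffac]
  | (n+2) =>
    rw [if_neg (by omega), if_neg (by omega)]
    unfold ffac
    refine Finset.prod_eq_zero (Finset.mem_range.mpr (by omega : 1 < n + 2)) ?_
    norm_num

/-- The `1/2`-Changhee numbers `Ch_{n,1/2} = (-1)^n n! C_n / 4^n`. -/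
noncomputable def changheeHalf (n : ℕ) : ℚ :=
  (-1) ^ n * (n.factorial : ℚ) * (catalan n : ℚ) / 4 ^ n

lemma coeff_mul_egf (f g : ℕ → ℚ) (n : ℕ) :
    PowerSeries.coeff n
      (PowerSeries.mk (fun k => f k / (k.factorial : ℚ)) *
        PowerSeries.mk (fun k => g k / (k.factorial : ℚ)))
    = (∑ k ∈ Finset.range (n+1), (n.choose k : ℚ) * f k * g (n-k)) / (n.factorial : ℚ) := by
  rw [PowerSeries.coeff_mul, Finset.Nat.sum_antidiagonal_eq_sum_range_succ_mk]
  rw [Finset.sum_div]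
  simp only [PowerSeries.coeff_mk]
  refine Finset.sum_congr rfl fun k hk => ?_
  have hk' : k ≤ n := Nat.lt_succ_iff.mp (Finset.mem_range.mp hk)
  rw [Nat.cast_choose ℚ hk']
  have h1 : (k.factorial : ℚ) ≠ 0 := Nat.cast_ne_zero.mpr (Nat.factorial_ne_zero _)
  have h2 : (((n-k).factorial : ℚ)) ≠ 0 := Nat.cast_ne_zero.mpr (Nat.factorial_ne_zero _)
  have h3 : ((n.factorial : ℚ)) ≠ 0 := Nat.cast_ne_zero.mpr (Nat.factorial_ne_zero _)
  field_simp

lemma coeff_two (n : ℕ) :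
    PowerSeries.coeff n (2 : PowerSeries ℚ) = if n = 0 then 2 else 0 := by
  rw [show (2 : PowerSeries ℚ) = PowerSeries.C 2 from (map_ofNat (PowerSeries.C (R := ℚ)) 2).symm,
    PowerSeries.coeff_C]

lemma coeff_four (n : ℕ) :
    PowerSeries.coeff n (4 : PowerSeries ℚ) = if n = 0 then 4 else 0 := by
  rw [show (4 : PowerSeries ℚ) = PowerSeries.C 4 from (map_ofNat (PowerSeries.C (R := ℚ)) 4).symm,
    PowerSeries.coeff_C]

lemma hDA (E : ℕ → ℚ)
    (hE : (PowerSeries.mk fun m => E m / (m.factorial : ℚ)) * (PowerSeries.exp ℚ + 1) = 2) :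
    (PowerSeries.mk fun n => ffac (1/2:ℚ) n / (n.factorial : ℚ)) *
      (PowerSeries.mk fun n => LL E (Pfall n) / (n.factorial : ℚ))
    = 2 - PowerSeries.mk fun n => LL E (Pfall n) / (n.factorial : ℚ) := by
  ext n
  rw [coeff_mul_egf, key_sum E hE n, map_sub, coeff_two, PowerSeries.coeff_mk]
  rcases eq_or_ne n 0 with rfl | hn
  · norm_num
  · simp only [if_neg hn]
    ring

lemma hDD :
    (PowerSeries.mk fun n => ffac (1/2:ℚ) n / (n.factorial : ℚ)) *
      (PowerSeries.mk fun n => ffac (1/2:ℚ) n / (n.factorial : ℚ))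
    = 1 + PowerSeries.X := by
  ext n
  rw [coeff_mul_egf, half_half, map_add, PowerSeries.coeff_one, PowerSeries.coeff_X]
  match n with
  | 0 => norm_num
  | 1 => norm_num
  | (n+2) =>
    have h0 : n+2 ≠ 0 := by omega
    have h1 : n+2 ≠ 1 := by omega
    simp [h0, h1]

lemma ch_conv (n : ℕ) :
    ∑ k ∈ Finset.range (n+1), (n.choose k : ℚ) * changheeHalf k * changheeHalf (n-k)
    = (n.factorial : ℚ) * ((-1)^n / 4^n) * (catalan (n+1) : ℚ) := by
  have hcat : ((catalan (n+1) : ℚ)) =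
      ∑ k ∈ Finset.range (n+1), (catalan k : ℚ) * (catalan (n-k) : ℚ) := by
    rw [catalan_succ']
    rw [Finset.Nat.sum_antidiagonal_eq_sum_range_succ_mk]
    push_cast
    rfl
  rw [hcat, Finset.mul_sum]
  refine Finset.sum_congr rfl fun k hk => ?_
  have hk' : k ≤ n := Nat.lt_succ_iff.mp (Finset.mem_range.mp hk)
  have e1 : (4:ℚ)^k * 4^(n-k) = 4^n := by rw [← pow_add]; congr 1; omega
  have e2 : ((-1):ℚ)^k * (-1)^(n-k) = (-1)^n := by rw [← pow_add]; congr 1; omega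
  have h1 : (k.factorial : ℚ) ≠ 0 := Nat.cast_ne_zero.mpr (Nat.factorial_ne_zero _)
  have h2 : (((n-k).factorial : ℚ)) ≠ 0 := Nat.cast_ne_zero.mpr (Nat.factorial_ne_zero _)
  have h4 : ((4:ℚ))^k ≠ 0 := by positivity
  have h5 : ((4:ℚ))^(n-k) ≠ 0 := by positivity
  unfold changheeHalf
  rw [Nat.cast_choose ℚ hk', ← e1, ← e2]
  field_simp

lemma hCC :
    PowerSeries.X * ((PowerSeries.mk fun n => changheeHalf n / (n.factorial : ℚ)) *
      (PowerSeries.mk fun n => changheeHalf n / (n.factorial : ℚ)))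
    = 4 - 4 * PowerSeries.mk fun n => changheeHalf n / (n.factorial : ℚ) := by
  ext n
  match n with
  | 0 =>
    rw [PowerSeries.coeff_zero_X_mul, map_sub, coeff_four,
      show (4 : PowerSeries ℚ) = PowerSeries.C 4 from (map_ofNat (PowerSeries.C (R := ℚ)) 4).symm,
      PowerSeries.coeff_C_mul, PowerSeries.coeff_mk]
    simp [changheeHalf]
  | (n+1) =>
    rw [PowerSeries.coeff_succ_X_mul, coeff_mul_egf, ch_conv, map_sub, coeff_four,
      show (4 : PowerSeries ℚ) = PowerSeries.C 4 from (map_ofNat (PowerSeries.C (R := ℚ)) 4).symm,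
      PowerSeries.coeff_C_mul, PowerSeries.coeff_mk, if_neg (Nat.succ_ne_zero n)]
    unfold changheeHalf
    have h1 : ((n.factorial : ℚ)) ≠ 0 := Nat.cast_ne_zero.mpr (Nat.factorial_ne_zero _)
    have h2 : (((n+1).factorial : ℚ)) ≠ 0 := Nat.cast_ne_zero.mpr (Nat.factorial_ne_zero _)
    have h4 : ((4:ℚ))^n ≠ 0 := by positivity
    have h5 : ((4:ℚ))^(n+1) ≠ 0 := by positivity
    field_simp
    ring

/-- `Ch_{n,1/2} = ∑_{m=0}^n 2^{-m} E_m S₁(n,m)` for Euler numbers `E`. -/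
theorem changheeHalf_eq_sum_euler_stirling1 (E : ℕ → ℚ)
    (hE : (PowerSeries.mk fun m => E m / (m.factorial : ℚ)) * (PowerSeries.exp ℚ + 1) = 2)
    (n : ℕ) :
    changheeHalf n = ∑ m ∈ Finset.range (n + 1), ((2 : ℚ) ^ m)⁻¹ * E m * stirling1 n m := by
  have key : (PowerSeries.mk fun k => LL E (Pfall k) / (k.factorial : ℚ))
      = PowerSeries.mk fun k => changheeHalf k / (k.factorial : ℚ) := by
    have h1 := hDA E hE
    have h2 := hDD
    have h3 := hCC
    set A : PowerSeries ℚ := PowerSeries.mk fun k => LL E (Pfall k) / (k.factorial : ℚ) with hA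
    set D : PowerSeries ℚ := PowerSeries.mk fun k => ffac (1/2:ℚ) k / (k.factorial : ℚ) with hD
    set Cp : PowerSeries ℚ := PowerSeries.mk fun k => changheeHalf k / (k.factorial : ℚ) with hCp
    have h4 : PowerSeries.X * (A * A) = 4 - 4 * A := by
      linear_combination (D * A + 2 - A) * h1 - (A * A) * h2
    have h5 : (A - Cp) * (PowerSeries.X * (A + Cp) + 4) = 0 := by
      linear_combination h4 - h3
    have h6 : PowerSeries.X * (A + Cp) + 4 ≠ 0 := by
      intro hc
      have hc2 := congrArg (PowerSeries.constantCoeff (R := ℚ)) hc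
      rw [map_add, map_mul, PowerSeries.constantCoeff_X, zero_mul, zero_add, map_zero,
        show (4 : PowerSeries ℚ) = PowerSeries.C 4 from (map_ofNat (PowerSeries.C (R := ℚ)) 4).symm,
        PowerSeries.constantCoeff_C] at hc2
      norm_num at hc2
    rcases mul_eq_zero.mp h5 with h | h
    · exact sub_eq_zero.mp h
    · exact absurd h h6
  have h8 := congrArg (PowerSeries.coeff n) key
  rw [PowerSeries.coeff_mk, PowerSeries.coeff_mk] at h8
  have hfac : ((n.factorial : ℚ)) ≠ 0 := Nat.cast_ne_zero.mpr (Nat.factorial_ne_zero _)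
  have h9 : changheeHalf n = LL E (Pfall n) := by
    field_simp at h8
    linarith
  rw [h9, LL_Pfall]
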